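/- Let μ and ν be probability measures on a measurable space with ν absolutely continuous with respect to μ, and let f = dν/dμ denote the Radon–Nikodym derivative. Then the Kullback–Leibler divergence of ν from μ satisfies KL(ν‖μ) = ∫ f·log(f) dμ ≤ ∫ (f − 1)² dμ, i.e., the KL divergence is bounded above by the chi-squared divergence. -/

import Mathlib

open MeasureTheory

open scoped ENNReal

lemma mul_log_le_sq {x : ℝ} (hx : 0 ≤ x) : x * Real.log x ≤ (x - 1) ^ 2 + (x - 1) := by
  rcases hx.eq_or_lt with h | h
  · simp [← h]
  · have := Real.log_le_sub_one_of_pos h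
    nlinarith

lemma sub_one_le_mul_log {x : ℝ} (hx : 0 ≤ x) : x - 1 ≤ x * Real.log x := by
  rcases hx.eq_or_lt with h | h
  · simp [← h]
  · have := Real.one_sub_inv_le_log_of_pos h
    have hx' : x * x⁻¹ = 1 := mul_inv_cancel₀ h.ne'
    nlinarith

open Classical in
/-- The Kullback–Leibler divergence `KL(ν‖μ) = ∫ f log f dμ` (with value `∞` when
`f log f` is not integrable, where `f = dν/dμ`) is bounded above by the
chi-squared divergence `χ²(ν, μ) = ∫ (f - 1)² dμ`, in `[0, ∞]`. -/
theorem stmt10 {α : Type*} [MeasurableSpace α] (μ ν : Measure α)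
    [IsProbabilityMeasure μ] [IsProbabilityMeasure ν] (hνμ : ν ≪ μ) :
    (if Integrable
          (fun x => (ν.rnDeriv μ x).toReal * Real.log ((ν.rnDeriv μ x).toReal)) μ
      then ENNReal.ofReal
          (∫ x, (ν.rnDeriv μ x).toReal * Real.log ((ν.rnDeriv μ x).toReal) ∂μ)
      else ∞) ≤
      ∫⁻ x, ENNReal.ofReal (((ν.rnDeriv μ x).toReal - 1) ^ 2) ∂μ := by
  set f : α → ℝ := fun x => (ν.rnDeriv μ x).toReal with hf_def
  have hf_meas : Measurable f := (Measure.measurable_rnDeriv ν μ).ennreal_toReal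
  have hf_nonneg : ∀ x, 0 ≤ f x := fun x => ENNReal.toReal_nonneg
  have hf_int : Integrable f μ := Measure.integrable_toReal_rnDeriv
  have hf_integral : ∫ x, f x ∂μ = 1 := by
    rw [hf_def, Measure.integral_toReal_rnDeriv hνμ]
    simp
  have hsq_meas : Measurable (fun x => (f x - 1) ^ 2) :=
    ((hf_meas.sub measurable_const).pow measurable_const)
  have hsq_nonneg : ∀ x, 0 ≤ (f x - 1) ^ 2 := fun x => sq_nonneg _
  have h_meas : Measurable (fun x => f x * Real.log (f x)) :=
    hf_meas.mul (Real.measurable_log.comp hf_meas)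
  have hf1 : Integrable (fun x => f x - 1) μ := hf_int.sub (integrable_const 1)
  by_cases hsq : Integrable (fun x => (f x - 1) ^ 2) μ
  · -- χ² finite: KL is integrable and bounded by the χ² integral
    have h_int : Integrable (fun x => f x * Real.log (f x)) μ := by
      refine Integrable.mono' (hsq.add hf1.abs)
        h_meas.aestronglyMeasurable (Filter.Eventually.of_forall fun x => ?_)
      have h1 := mul_log_le_sq (hf_nonneg x)
      have h2 := sub_one_le_mul_log (hf_nonneg x)
      simp only [Pi.add_apply, Pi.abs_apply]
      rw [Real.norm_eq_abs, abs_le]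
      constructor
      · have : -|f x - 1| ≤ f x * Real.log (f x) :=
          le_trans (neg_abs_le _) h2
        nlinarith [sq_nonneg (f x - 1), abs_nonneg (f x - 1)]
      · exact h1.trans (by gcongr; exact le_abs_self _)
    rw [if_pos h_int]
    have key : ∫ x, f x * Real.log (f x) ∂μ ≤ ∫ x, (f x - 1) ^ 2 ∂μ := by
      have : ∫ x, f x * Real.log (f x) ∂μ ≤ ∫ x, ((f x - 1) ^ 2 + (f x - 1)) ∂μ := by
        refine integral_mono h_int (hsq.add hf1)
          fun x => mul_log_le_sq (hf_nonneg x)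
      rwa [integral_add hsq hf1,
        integral_sub hf_int (integrable_const 1), hf_integral, integral_const,
        Measure.real, measure_univ, ENNReal.toReal_one, one_smul, sub_self, add_zero] at this
    calc ENNReal.ofReal (∫ x, f x * Real.log (f x) ∂μ)
        ≤ ENNReal.ofReal (∫ x, (f x - 1) ^ 2 ∂μ) := ENNReal.ofReal_le_ofReal key
      _ = ∫⁻ x, ENNReal.ofReal ((f x - 1) ^ 2) ∂μ :=
          ofReal_integral_eq_lintegral_ofReal hsq
            (Filter.Eventually.of_forall hsq_nonneg)
  · -- χ² infinite
    have : ∫⁻ x, ENNReal.ofReal ((f x - 1) ^ 2) ∂μ = ∞ := by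
      by_contra h
      exact hsq ⟨hsq_meas.aestronglyMeasurable,
        (hasFiniteIntegral_iff_ofReal (Filter.Eventually.of_forall hsq_nonneg)).2
          (lt_top_iff_ne_top.2 h)⟩
    rw [this]
    exact le_top
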